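/- arXiv:2305.08966 — 12 statements merged into one kernel-verified Lean document; each statement's English description precedes it below -/
import Mathlib

section
/- For every even natural number k ≥ 0, there exist rational numbers a and b such that I_k = ∫₀^{π/2} x·cos^k(x) dx = a·π² + b. -/
open Real intervalIntegral

lemma int_rec (m : ℕ) :
    (m+2 : ℝ) * ∫ x in (0:ℝ)..(π/2), x * cos x ^ (m+2)
      = (m+1 : ℝ) * (∫ x in (0:ℝ)..(π/2), x * cos x ^ m) - 1/(m+2) := by
  set F : ℝ → ℝ := fun x => x * cos x ^ (m+1) * sin x + cos x ^ (m+2) * ((m:ℝ)+2)⁻¹ with hF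
  have hm2 : ((m:ℝ)+2) ≠ 0 := by positivity
  have hderiv : ∀ x ∈ Set.uIcc (0:ℝ) (π/2),
      HasDerivAt F ((m+2 : ℝ) * (x * cos x ^ (m+2)) - (m+1 : ℝ) * (x * cos x ^ m)) x := by
    intro x _
    have h1 : HasDerivAt (fun x : ℝ => x * cos x ^ (m+1) * sin x)
        ((1 * cos x ^ (m+1) + x * ((m+1 : ℕ) * cos x ^ m * (-sin x))) * sin x
          + x * cos x ^ (m+1) * cos x) x := by
      exact ((hasDerivAt_id x).mul ((Real.hasDerivAt_cos x).pow (m+1))).mul (Real.hasDerivAt_sin x)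
    have h2 : HasDerivAt (fun x : ℝ => cos x ^ (m+2) * ((m:ℝ)+2)⁻¹)
        (((m+2 : ℕ) * cos x ^ (m+1) * (-sin x)) * ((m:ℝ)+2)⁻¹) x :=
      ((Real.hasDerivAt_cos x).pow (m+2)).mul_const _
    have := h1.add h2
    refine this.congr_deriv ?_
    symm
    push_cast
    rw [show ((m:ℝ)+2) * cos x ^ (m+1) * -sin x * ((m:ℝ)+2)⁻¹ = -(cos x ^ (m+1) * sin x) from by
      field_simp]
    linear_combination ((m:ℝ)+1) * x * cos x ^ m * sin_sq_add_cos_sq x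
  have hcont : IntervalIntegrable
      (fun x => (m+2 : ℝ) * (x * cos x ^ (m+2)) - (m+1 : ℝ) * (x * cos x ^ m))
      MeasureTheory.volume 0 (π/2) := by
    apply Continuous.intervalIntegrable; fun_prop
  have key := intervalIntegral.integral_eq_sub_of_hasDerivAt hderiv hcont
  have hF2 : F (π/2) = 0 := by
    simp [hF, Real.cos_pi_div_two, zero_pow (Nat.succ_ne_zero m), zero_pow (Nat.succ_ne_zero (m+1))]
  have hF0 : F 0 = ((m:ℝ)+2)⁻¹ := by simp [hF]
  have hi1 : IntervalIntegrable (fun x => x * cos x ^ (m+2)) MeasureTheory.volume 0 (π/2) := by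
    apply Continuous.intervalIntegrable; fun_prop
  have hi2 : IntervalIntegrable (fun x => x * cos x ^ m) MeasureTheory.volume 0 (π/2) := by
    apply Continuous.intervalIntegrable; fun_prop
  rw [intervalIntegral.integral_sub ((hi1.const_mul _)) ((hi2.const_mul _)),
    intervalIntegral.integral_const_mul, intervalIntegral.integral_const_mul,
    hF2, hF0] at key

  rw [one_div]
  linarith [key]

lemma aux_even : ∀ k : ℕ, Even k →
    ∃ a b : ℚ, ∫ x in (0:ℝ)..(π/2), x * cos x ^ k = (a:ℝ) * π^2 + (b:ℝ) := by
  intro k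
  induction k using Nat.strong_induction_on with
  | _ k ih =>
    intro hk
    match k with
    | 0 =>
      refine ⟨1/8, 0, ?_⟩
      simp only [pow_zero, mul_one]
      rw [integral_id]
      push_cast
      ring
    | 1 => exact absurd hk (by decide)
    | (m+2) =>
      have hm : Even m := by
        rcases hk with ⟨r, hr⟩; exact ⟨r-1, by omega⟩
      obtain ⟨a, b, hab⟩ := ih m (by omega) hm
      have hrec := int_rec m
      rw [hab] at hrec
      have hm2 : ((m:ℝ)+2) ≠ 0 := by positivity
      refine ⟨a*(m+1)/(m+2), b*(m+1)/(m+2) - 1/(m+2)^2, ?_⟩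
      have hI : ∫ x in (0:ℝ)..(π/2), x * cos x ^ (m+2)
          = (((m:ℝ)+1) * ((a:ℝ) * π^2 + (b:ℝ)) - 1/((m:ℝ)+2)) / ((m:ℝ)+2) := by
        field_simp at hrec ⊢
        linarith
      rw [hI]
      have hm2' : ((m:ℚ)+2) ≠ 0 := by positivity
      push_cast
      field_simp
      ring

theorem stmt_2 (k : ℕ) (hk : Even k) :
    ∃ a b : ℚ, ∫ x in (0:ℝ)..(π/2), x * cos x ^ k = (a:ℝ) * π^2 + (b:ℝ) :=
  aux_even k hk
end

section
/- For every odd natural number k ≥ 1, there exist rational numbers c and d such that I_k = ∫₀^{π/2} x·cos^k(x) dx = c·π + d. -/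
open Real

lemma deriv_aux (m : ℕ) (x : ℝ) :
    HasDerivAt (fun x : ℝ => x * cos x ^ (2*m+2) * sin x + cos x ^ (2*m+3) / (2*m+3))
      ((2*m+3) * (x * cos x ^ (2*m+3)) - (2*m+2) * (x * cos x ^ (2*m+1))) x := by
  have H := (((hasDerivAt_id x).mul ((Real.hasDerivAt_cos x).pow (2*m+2))).mul
      (Real.hasDerivAt_sin x)).add (((Real.hasDerivAt_cos x).pow (2*m+3)).div_const ((2*m+3 : ℝ)))
  refine H.congr_deriv ?_
  have h := Real.sin_sq_add_cos_sq x
  have e1 : 2*m+2-1 = 2*m+1 := by omega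
  have e2 : 2*m+3-1 = 2*m+2 := by omega
  rw [e1, e2]
  simp only [id_eq, Pi.pow_apply, Pi.mul_apply]
  push_cast
  have hne : (2*(m:ℝ)+3) ≠ 0 := by positivity
  field_simp
  linear_combination (-(2*(m:ℝ)+2)*x*cos x^(2*m+1)) * h

lemma int_aux (n : ℕ) : IntervalIntegrable (fun x : ℝ => x * cos x ^ n)
    MeasureTheory.volume 0 (π/2) := by
  apply Continuous.intervalIntegrable
  fun_prop

lemma recaux (m : ℕ) :
    ∫ x in (0:ℝ)..(π/2), ((2*m+3:ℝ) * (x * cos x ^ (2*m+3)) - (2*m+2) * (x * cos x ^ (2*m+1)))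
      = -(1/(2*m+3)) := by
  rw [intervalIntegral.integral_eq_sub_of_hasDerivAt (fun x _ => deriv_aux m x)
    (by apply Continuous.intervalIntegrable; fun_prop)]
  norm_num [Real.cos_pi_div_two, Real.sin_pi_div_two]

lemma key (m : ℕ) :
    (2*m+3:ℝ) * (∫ x in (0:ℝ)..(π/2), x * cos x ^ (2*m+3))
      - (2*m+2) * (∫ x in (0:ℝ)..(π/2), x * cos x ^ (2*m+1)) = -(1/(2*m+3)) := by
  have h := recaux m
  rw [intervalIntegral.integral_sub ((int_aux (2*m+3)).const_mul _)
    ((int_aux (2*m+1)).const_mul _), intervalIntegral.integral_const_mul,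
    intervalIntegral.integral_const_mul] at h
  exact h

lemma base : ∫ x in (0:ℝ)..(π/2), x * cos x ^ 1 = π/2 - 1 := by
  have hD : ∀ x ∈ Set.uIcc (0:ℝ) (π/2), HasDerivAt (fun x : ℝ => x * sin x + cos x)
      (x * cos x ^ 1) x := by
    intro x _
    have H := ((hasDerivAt_id x).mul (Real.hasDerivAt_sin x)).add (Real.hasDerivAt_cos x)
    refine H.congr_deriv ?_
    simp only [id_eq, pow_one, one_mul]
    ring
  rw [intervalIntegral.integral_eq_sub_of_hasDerivAt hD (int_aux 1)]
  norm_num [Real.cos_pi_div_two, Real.sin_pi_div_two]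

lemma main_ind (m : ℕ) : ∃ c d : ℚ,
    ∫ x in (0:ℝ)..(π/2), x * cos x ^ (2*m+1) = (c:ℝ) * π + (d:ℝ) := by
  induction m with
  | zero =>
    refine ⟨1/2, -1, ?_⟩
    rw [show 2*0+1 = 1 from rfl, base]
    push_cast; ring
  | succ n ih =>
    obtain ⟨c, d, hcd⟩ := ih
    refine ⟨(2*n+2)/(2*n+3)*c, ((2*n+2)*d - 1/(2*n+3))/(2*n+3), ?_⟩
    have hk := key n
    rw [hcd] at hk
    have h3 : (2*(n:ℝ)+3) ≠ 0 := by positivity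
    rw [show 2*(n+1)+1 = 2*n+3 by ring]
    have hI : (∫ x in (0:ℝ)..(π/2), x * cos x ^ (2*n+3))
        = ((2*(n:ℝ)+2)*((c:ℝ)*π+(d:ℝ)) - 1/(2*(n:ℝ)+3))/(2*(n:ℝ)+3) := by
      rw [eq_div_iff h3]
      linear_combination hk
    rw [hI]
    push_cast
    ring

theorem stmt_3 (k : ℕ) (hk : Odd k) :
    ∃ c d : ℚ, ∫ x in (0:ℝ)..(π/2), x * cos x ^ k = (c:ℝ) * π + (d:ℝ) := by
  obtain ⟨m, rfl⟩ := hk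
  exact main_ind m
end

section
/- For all natural numbers n ≥ 1 and k ≥ 2n, the integral I_k = ∫₀^{π/2} x·cos^k(x) dx satisfies I_k = I_{k−2n} · ∏_{j=0}^{n−1} (k−2j−1)/(k−2j) − ( 1/k² + ∑_{i=1}^{n−1} (1/(k−2i)²) · ∏_{j=0}^{i−1} (k−2j−1)/(k−2j) ), where the sum ∑_{i=1}^{0} is taken to be zero. -/
open Real

lemma key_rec (k : ℕ) (hk : 2 ≤ k) :
    ∫ x in (0:ℝ)..(π/2), x * cos x ^ k =
      (((k:ℝ)-1)/k) * (∫ x in (0:ℝ)..(π/2), x * cos x ^ (k-2)) - 1/(k:ℝ)^2 := by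
  have hk0 : (k:ℝ) ≠ 0 := by positivity
  -- derivative of x * cos^(k-1) * sin
  have hF : ∀ x : ℝ, HasDerivAt (fun x : ℝ => x * cos x ^ (k-1) * sin x)
      (cos x ^ (k-1) * sin x + x * ((k:ℝ) * cos x ^ k - ((k:ℝ)-1) * cos x ^ (k-2))) x := by
    intro x
    have h1 : HasDerivAt (fun x : ℝ => x) 1 x := hasDerivAt_id x
    have hc : HasDerivAt (fun x : ℝ => cos x ^ (k-1))
        (((k-1 : ℕ) : ℝ) * cos x ^ (k-2) * (-sin x)) x := by
      have := (Real.hasDerivAt_cos x).pow (k-1)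
      rw [show k - 2 = k - 1 - 1 by omega]; exact this
    have hs : HasDerivAt sin (cos x) x := Real.hasDerivAt_sin x
    have := ((h1.fun_mul hc).fun_mul hs)
    refine this.congr_deriv (Eq.symm ?_)
    have hcast : ((k-1 : ℕ) : ℝ) = (k:ℝ) - 1 := by
      have : (1:ℕ) ≤ k := by omega
      push_cast [Nat.cast_sub this]; ring
    have hpow : cos x ^ (k-2) * cos x ^ 2 = cos x ^ k := by
      rw [← pow_add]; congr 1; omega
    have hpow1 : cos x ^ (k-1) * cos x = cos x ^ k := by
      rw [← pow_succ]; congr 1; omega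
    have hsin2 : sin x ^ 2 = 1 - cos x ^ 2 := Real.sin_sq x
    have e1 : cos x ^ (k-1) = cos x ^ (k-2) * cos x := by
      rw [← pow_succ]; congr 1; omega
    have e2 : cos x ^ k = cos x ^ (k-2) * cos x ^ 2 := hpow.symm
    rw [hcast, e1, e2]
    linear_combination (x * ((k:ℝ)-1) * cos x ^ (k-2)) * hsin2
  have hint : ∫ x in (0:ℝ)..(π/2),
      (cos x ^ (k-1) * sin x + x * ((k:ℝ) * cos x ^ k - ((k:ℝ)-1) * cos x ^ (k-2))) =
      (π/2) * cos (π/2) ^ (k-1) * sin (π/2) - 0 * cos 0 ^ (k-1) * sin 0 := by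
    apply intervalIntegral.integral_eq_sub_of_hasDerivAt (fun x _ => hF x)
    apply Continuous.intervalIntegrable
    fun_prop
  have hzero : (π/2) * cos (π/2) ^ (k-1) * sin (π/2) - 0 * cos 0 ^ (k-1) * sin 0 = 0 := by
    rw [Real.cos_pi_div_two, zero_pow (by omega : k - 1 ≠ 0)]
    ring
  -- ∫ cos^(k-1) sin = 1/k
  have hG : ∀ x : ℝ, HasDerivAt (fun x : ℝ => -cos x ^ k / k) (cos x ^ (k-1) * sin x) x := by
    intro x
    have := ((Real.hasDerivAt_cos x).pow k).neg.div_const (k:ℝ)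
    refine this.congr_deriv ?_
    have : k - 1 = k - 1 := rfl
    field_simp
  have hint2 : ∫ x in (0:ℝ)..(π/2), cos x ^ (k-1) * sin x =
      (-cos (π/2) ^ k / k) - (-cos 0 ^ k / k) := by
    apply intervalIntegral.integral_eq_sub_of_hasDerivAt (fun x _ => hG x)
    apply Continuous.intervalIntegrable; fun_prop
  rw [Real.cos_pi_div_two, Real.cos_zero, zero_pow (by omega : k ≠ 0), one_pow] at hint2
  have hi1 : IntervalIntegrable (fun x => cos x ^ (k-1) * sin x) MeasureTheory.volume 0 (π/2) := by
    apply Continuous.intervalIntegrable; fun_prop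
  have hi2 : IntervalIntegrable (fun x => x * ((k:ℝ) * cos x ^ k - ((k:ℝ)-1) * cos x ^ (k-2)))
      MeasureTheory.volume 0 (π/2) := by
    apply Continuous.intervalIntegrable; fun_prop
  rw [intervalIntegral.integral_add hi1 hi2, hzero, hint2] at hint
  have hsplit : ∫ x in (0:ℝ)..(π/2), x * ((k:ℝ) * cos x ^ k - ((k:ℝ)-1) * cos x ^ (k-2)) =
      (k:ℝ) * (∫ x in (0:ℝ)..(π/2), x * cos x ^ k)
        - ((k:ℝ)-1) * (∫ x in (0:ℝ)..(π/2), x * cos x ^ (k-2)) := by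
    have e : ∀ x : ℝ, x * ((k:ℝ) * cos x ^ k - ((k:ℝ)-1) * cos x ^ (k-2)) =
        (k:ℝ) * (x * cos x ^ k) - ((k:ℝ)-1) * (x * cos x ^ (k-2)) := by intro x; ring
    simp_rw [e]
    rw [intervalIntegral.integral_sub, intervalIntegral.integral_const_mul,
      intervalIntegral.integral_const_mul]
    · apply Continuous.intervalIntegrable; fun_prop
    · apply Continuous.intervalIntegrable; fun_prop
  rw [hsplit] at hint
  norm_num at hint
  field_simp at hint ⊢
  linear_combination hint

theorem stmt_4 (n k : ℕ) (hn : 1 ≤ n) (hk : 2 * n ≤ k) :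
    ∫ x in (0:ℝ)..(π/2), x * cos x ^ k =
      (∫ x in (0:ℝ)..(π/2), x * cos x ^ (k - 2 * n)) *
        (∏ j ∈ Finset.range n, ((k:ℝ) - 2*j - 1) / ((k:ℝ) - 2*j)) -
      (1 / (k:ℝ)^2 +
        ∑ i ∈ Finset.Icc 1 (n - 1),
          (1 / ((k:ℝ) - 2*i)^2) *
            ∏ j ∈ Finset.range i, ((k:ℝ) - 2*j - 1) / ((k:ℝ) - 2*j)) := by
  induction n, hn using Nat.le_induction with
  | base =>
    rw [key_rec k (by omega)]
    norm_num [Finset.Icc_self]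
    ring
  | succ n hn ih =>
    obtain ⟨m, rfl⟩ : ∃ m, n = m + 1 := ⟨n - 1, by omega⟩
    have h2n : 2 * (m + 1) ≤ k := by omega
    rw [ih h2n]
    have hkey := key_rec (k - 2 * (m + 1)) (by omega)
    have hexp : k - 2 * (m + 1) - 2 = k - 2 * (m + 1 + 1) := by omega
    have hcast : ((k - 2 * (m + 1) : ℕ) : ℝ) = (k:ℝ) - 2 * (m + 1) := by
      push_cast [Nat.cast_sub h2n]; ring
    rw [hexp, hcast] at hkey
    rw [hkey]
    rw [show (m + 1 + 1 - 1) = m + 1 from rfl,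
      Finset.sum_Icc_succ_top (by omega : 1 ≤ m + 1)]
    rw [show (m + 1 - 1) = m from rfl]
    simp only [Finset.prod_range_succ]
    push_cast
    ring
end

section
/- For every natural number n ≥ 1, I_{2n} = ∫₀^{π/2} x·cos^{2n}(x) dx = ((2n−1)!!/(2n)!!)·(π²/8) − ((2n−1)!!/(4·(2n)!!)) · ∑_{j=1}^{n} (1/j²)·((2j)!!/(2j−1)!!). -/
open Real Nat

lemma recur (m : ℕ) :
    ((m:ℝ)+2) * ∫ x in (0:ℝ)..(π/2), x * cos x ^ (m+2) =
      ((m:ℝ)+1) * (∫ x in (0:ℝ)..(π/2), x * cos x ^ m) - 1/((m:ℝ)+2) := by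
  have hm2 : ((m:ℝ)+2) ≠ 0 := by positivity
  set F : ℝ → ℝ := fun x => x * cos x ^ (m+1) * sin x + cos x ^ (m+2) / ((m:ℝ)+2) with hF
  have hd : ∀ x ∈ Set.uIcc (0:ℝ) (π/2), HasDerivAt F
      (((m:ℝ)+2) * (x * cos x ^ (m+2)) - ((m:ℝ)+1) * (x * cos x ^ m)) x := by
    intro x _
    have h1 : HasDerivAt (fun x : ℝ => x * cos x ^ (m+1) * sin x)
        (cos x ^ (m+1) * sin x + x * (((m:ℝ)+1) * cos x ^ m * (-sin x)) * sin x
          + x * cos x ^ (m+1) * cos x) x := by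
      have hc : HasDerivAt (fun x : ℝ => cos x ^ (m+1))
          (((m:ℝ)+1) * cos x ^ m * (-sin x)) x := by
        have := (Real.hasDerivAt_cos x).fun_pow (m+1)
        simpa [mul_comm, Nat.add_sub_cancel] using this
      have := ((hasDerivAt_id x).fun_mul hc).fun_mul (Real.hasDerivAt_sin x)
      refine this.congr_deriv ?_
      simp only [id_eq]; ring
    have h2 : HasDerivAt (fun x : ℝ => cos x ^ (m+2) / ((m:ℝ)+2))
        ((((m:ℝ)+2) * cos x ^ (m+1) * (-sin x)) / ((m:ℝ)+2)) x := by
      have hc : HasDerivAt (fun x : ℝ => cos x ^ (m+2))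
          (((m:ℝ)+2) * cos x ^ (m+1) * (-sin x)) x := by
        have := (Real.hasDerivAt_cos x).fun_pow (m+2)
        simpa [mul_comm, Nat.add_sub_cancel] using this
      exact hc.div_const _
    have := h1.fun_add h2
    refine this.congr_deriv ?_
    have hs : sin x ^ 2 = 1 - cos x ^ 2 := by
      have := sin_sq_add_cos_sq x; linarith
    have hdiv : ((m:ℝ)+2) * cos x ^ (m+1) * (-sin x) / ((m:ℝ)+2)
        = cos x ^ (m+1) * (-sin x) := by field_simp
    rw [hdiv]
    linear_combination (-((m:ℝ)+1) * x * cos x ^ m) * hs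
  have hint : IntervalIntegrable
      (fun x => ((m:ℝ)+2) * (x * cos x ^ (m+2)) - ((m:ℝ)+1) * (x * cos x ^ m))
      MeasureTheory.volume 0 (π/2) := by
    apply Continuous.intervalIntegrable; continuity
  have hcal := intervalIntegral.integral_eq_sub_of_hasDerivAt hd hint
  have hF0 : F 0 = 1/((m:ℝ)+2) := by simp [hF]
  have hFp : F (π/2) = 0 := by simp [hF]
  rw [hF0, hFp] at hcal
  have hi1 : IntervalIntegrable (fun x => x * cos x ^ (m+2)) MeasureTheory.volume 0 (π/2) := by
    apply Continuous.intervalIntegrable; continuity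
  have hi2 : IntervalIntegrable (fun x => x * cos x ^ m) MeasureTheory.volume 0 (π/2) := by
    apply Continuous.intervalIntegrable; continuity
  rw [intervalIntegral.integral_sub ((hi1.const_mul _)) ((hi2.const_mul _)),
    intervalIntegral.integral_const_mul, intervalIntegral.integral_const_mul] at hcal
  linarith [hcal]

lemma main_lemma (n : ℕ) :
    ∫ x in (0:ℝ)..(π/2), x * cos x ^ (2 * n) =
      (((2*n - 1)‼ : ℝ) / ((2*n)‼ : ℝ)) * (π^2 / 8) -
      (((2*n - 1)‼ : ℝ) / (4 * ((2*n)‼ : ℝ))) *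
        ∑ j ∈ Finset.Icc 1 n, (1 / (j:ℝ)^2) * (((2*j)‼ : ℝ) / ((2*j - 1)‼ : ℝ)) := by
  induction n with
  | zero =>
      simp [Nat.doubleFactorial, integral_id]
      ring
  | succ m ih =>
      have hA : (2*(m+1) - 1)‼ = (2*m+1) * (2*m - 1)‼ := by
        cases m with
        | zero => rfl
        | succ p =>
            have e : 2*(p+1+1) - 1 = (2*(p+1) - 1) + 2 := by omega
            rw [e, Nat.doubleFactorial_add_two]
            congr 1
      have hB : (2*(m+1))‼ = (2*m+2) * (2*m)‼ := by
        have : 2*(m+1) = (2*m)+2 := by ring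
        rw [this, Nat.doubleFactorial]
      have hApos : (0:ℝ) < ((2*m - 1)‼ : ℝ) := by
        exact_mod_cast Nat.doubleFactorial_pos _
      have hBpos : (0:ℝ) < ((2*m)‼ : ℝ) := by
        exact_mod_cast Nat.doubleFactorial_pos _
      have hrec := recur (2*m)
      have h2m : (2*m : ℕ) + 2 = 2*(m+1) := by ring
      rw [h2m] at hrec
      have hsum := Finset.sum_Icc_succ_top (Nat.succ_le_succ (Nat.zero_le m))
        (fun j => (1 / (j:ℝ)^2) * (((2*j)‼ : ℝ) / ((2*j - 1)‼ : ℝ)))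
      rw [hsum]
      rw [ih] at hrec
      have hm1 : ((m:ℝ)+1) ≠ 0 := by positivity
      have hgoal : ∫ x in (0:ℝ)..(π/2), x * cos x ^ (2 * (m+1)) =
        (((2*m:ℝ)+1) * ((((2*m - 1)‼ : ℝ) / ((2*m)‼ : ℝ)) * (π^2 / 8) -
          (((2*m - 1)‼ : ℝ) / (4 * ((2*m)‼ : ℝ))) *
            ∑ j ∈ Finset.Icc 1 m, (1 / (j:ℝ)^2) * (((2*j)‼ : ℝ) / ((2*j - 1)‼ : ℝ)))
          - 1/((2*m:ℝ)+2)) / ((2*m:ℝ)+2) := by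
        have h2 : ((2*m:ℝ)+2) ≠ 0 := by positivity
        field_simp at hrec ⊢
        push_cast at hrec
        linear_combination hrec
      rw [hgoal, hA, hB]
      push_cast
      have h2 : ((2*m:ℝ)+2) ≠ 0 := by positivity
      field_simp
      ring

set_option linter.unusedVariables false in
theorem stmt_5 (n : ℕ) (hn : 1 ≤ n) :
    ∫ x in (0:ℝ)..(π/2), x * cos x ^ (2 * n) =
      (((2*n - 1)‼ : ℝ) / ((2*n)‼ : ℝ)) * (π^2 / 8) -
      (((2*n - 1)‼ : ℝ) / (4 * ((2*n)‼ : ℝ))) *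
        ∑ j ∈ Finset.Icc 1 n, (1 / (j:ℝ)^2) * (((2*j)‼ : ℝ) / ((2*j - 1)‼ : ℝ)) := by
  exact main_lemma n
end

section
/- For every natural number n ≥ 1, I_{2n} = ∫₀^{π/2} x·cos^{2n}(x) dx = (1/4)·W_{2n}·( π − (2/π)·∑_{j=1}^{n} (1/j²)·((2j)!!/(2j−1)!!) ), where W_{2n} = ∫₀^{π/2} cos^{2n}(x) dx. -/
open Real Nat intervalIntegral

noncomputable def II (k : ℕ) : ℝ := ∫ x in (0:ℝ)..(π/2), x * cos x ^ k
noncomputable def WW (k : ℕ) : ℝ := ∫ x in (0:ℝ)..(π/2), cos x ^ k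

lemma Irec (k : ℕ) : ((k:ℝ)+2) * II (k+2) = ((k:ℝ)+1) * II k - 1/((k:ℝ)+2) := by
  have hk : ((k:ℝ)+2) ≠ 0 := by positivity
  have hderiv : ∀ x ∈ Set.uIcc (0:ℝ) (π/2),
      HasDerivAt (fun x : ℝ => x * cos x ^ (k+1) * sin x + cos x ^ (k+2) / ((k:ℝ)+2))
        (((k:ℝ)+2) * (x * cos x ^ (k+2)) - ((k:ℝ)+1) * (x * cos x ^ k)) x := by
    intro x _
    have h1 : HasDerivAt (fun x : ℝ => x * cos x ^ (k+1) * sin x + cos x ^ (k+2) / ((k:ℝ)+2)) _ x := (((hasDerivAt_id x).mul ((hasDerivAt_cos x).pow (k+1))).mul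
      (hasDerivAt_sin x)).add (((hasDerivAt_cos x).pow (k+2)).div_const ((k:ℝ)+2))
    convert h1 using 1
    simp only [Nat.add_sub_cancel, id_eq, Pi.pow_apply, Pi.mul_apply]
    have hs := sin_sq x
    have hdiv : ((k:ℝ)+2) * cos x ^ (k+1) * (-sin x) / ((k:ℝ)+2)
        = cos x ^ (k+1) * (-sin x) := by
      rw [mul_assoc, mul_div_assoc]
      field_simp
    push_cast
    rw [hdiv]
    linear_combination (((k:ℝ)+1) * x * cos x ^ k) * hs
  have hint : IntervalIntegrable
      (fun x : ℝ => ((k:ℝ)+2) * (x * cos x ^ (k+2)) - ((k:ℝ)+1) * (x * cos x ^ k))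
      MeasureTheory.volume 0 (π/2) := by
    apply Continuous.intervalIntegrable; fun_prop
  have H := integral_eq_sub_of_hasDerivAt hderiv hint
  have h1 : IntervalIntegrable (fun x : ℝ => x * cos x ^ (k+2)) MeasureTheory.volume 0 (π/2) := by
    apply Continuous.intervalIntegrable; fun_prop
  have h2 : IntervalIntegrable (fun x : ℝ => x * cos x ^ k) MeasureTheory.volume 0 (π/2) := by
    apply Continuous.intervalIntegrable; fun_prop
  rw [intervalIntegral.integral_sub ((h1.const_mul _)) ((h2.const_mul _)),
    intervalIntegral.integral_const_mul, intervalIntegral.integral_const_mul] at H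
  simp only [cos_pi_div_two, sin_pi_div_two, Real.cos_zero, Real.sin_zero] at H
  rw [zero_pow (by omega), zero_pow (by omega)] at H
  unfold II
  norm_num at H
  rw [one_div]
  linarith

lemma Wrec (k : ℕ) : WW (k+2) = (((k:ℝ)+1)/((k:ℝ)+2)) * WW k := by
  unfold WW
  rw [integral_cos_pow]
  norm_num

lemma oddDF (m : ℕ) : ((2*m+1)‼ : ℕ) = (2*m+1) * (2*m-1)‼ := by
  cases m with
  | zero => simp
  | succ m =>
    have h1 : 2*(m+1)+1 = 2*m+1+2 := by omega
    have h2 : 2*(m+1)-1 = 2*m+1 := by omega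
    rw [h1, h2, Nat.doubleFactorial_add_two]

lemma Wallis (m : ℕ) : WW (2*m) * (((2*m)‼ : ℕ) : ℝ) = π/2 * (((2*m-1)‼ : ℕ) : ℝ) := by
  induction m with
  | zero => simp [WW]
  | succ m ih =>
    have h2 : 2*(m+1) = 2*m + 2 := by ring
    rw [h2]
    have h3 : 2*m + 2 - 1 = 2*m+1 := by omega
    rw [h3, Nat.doubleFactorial_add_two, oddDF m, Wrec]
    push_cast
    have hk : (2*(m:ℝ)+2) ≠ 0 := by positivity
    have hcan : (2*(m:ℝ)+1)/(2*(m:ℝ)+2) * WW (2*m) * ((2*(m:ℝ)+2) * (((2*m)‼:ℕ):ℝ))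
        = (2*(m:ℝ)+1) * (WW (2*m) * (((2*m)‼:ℕ):ℝ)) := by
      field_simp
    rw [hcan, ih]
    ring

lemma key_s6 (n : ℕ) : II (2*n) = (1/4) * WW (2*n) *
    (π - (2 / π) * ∑ j ∈ Finset.Icc 1 n, (1 / (j:ℝ)^2) * (((2*j)‼ : ℝ) / ((2*j - 1)‼ : ℝ))) := by
  induction n with
  | zero =>
    simp [II, WW, integral_id]
    ring
  | succ n ih =>
    have hpi : (π:ℝ) ≠ 0 := Real.pi_ne_zero
    have h1 : (2*(n+1) : ℕ) = 2*n+2 := by omega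
    rw [h1, Finset.sum_Icc_succ_top (by omega : (1:ℕ) ≤ n+1)]
    rw [h1, show (2*n+2-1 : ℕ) = 2*n+1 from by omega]
    have hI := Irec (2*n)
    have hW := Wrec (2*n)
    have hWal := Wallis (n+1)
    rw [h1, show (2*n+2-1 : ℕ) = 2*n+1 from by omega] at hWal
    push_cast at hI hW hWal ⊢
    set A := II (2*n)
    set B := WW (2*n)
    set S := ∑ j ∈ Finset.Icc 1 n, (1 / (j:ℝ)^2) * (((2*j)‼ : ℝ) / ((2*j - 1)‼ : ℝ)) with hS
    have hb : (((2*n+1)‼ : ℕ) : ℝ) ≠ 0 := by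
      exact_mod_cast (Nat.doubleFactorial_pos _).ne'
    have hn2 : ((n:ℝ)+1) ≠ 0 := by positivity
    have hk2 : (2*(n:ℝ)+2) ≠ 0 := by positivity
    have hdf : (((2*n+2)‼ : ℕ) : ℝ) = (2*(n:ℝ)+2) * (((2*n)‼:ℕ):ℝ) := by
      rw [Nat.doubleFactorial_add_two]
      push_cast
      ring
    rw [hdf] at hWal ⊢
    have hba : (2*(n:ℝ)+1) * B * (((2*n)‼ : ℕ) : ℝ) = (π/2) * (((2*n+1)‼ : ℕ) : ℝ) := by
      rw [hW] at hWal
      field_simp at hWal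
      have h' : ((2*(n:ℝ)+1) * B * (((2*n)‼:ℕ):ℝ) * 2) * (2*(n:ℝ)+2)
          = (π * (((2*n+1)‼:ℕ):ℝ)) * (2*(n:ℝ)+2) := by linear_combination (2*(n:ℝ)+2) * hWal
      have h'' := mul_right_cancel₀ hk2 h'
      linear_combination h'' / 2
    have hIval : II (2*n+2) = ((2*(n:ℝ)+1) * A - 1/(2*(n:ℝ)+2)) / (2*(n:ℝ)+2) := by
      rw [eq_div_iff hk2]
      linear_combination hI
    rw [hIval, ih, hW]
    field_simp
    linear_combination 8 * hba

theorem stmt_6 (n : ℕ) (hn : 1 ≤ n) :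
    ∫ x in (0:ℝ)..(π/2), x * cos x ^ (2 * n) =
      (1/4) * (∫ x in (0:ℝ)..(π/2), cos x ^ (2 * n)) *
        (π - (2 / π) *
          ∑ j ∈ Finset.Icc 1 n, (1 / (j:ℝ)^2) * (((2*j)‼ : ℝ) / ((2*j - 1)‼ : ℝ))) := by
  exact key_s6 n
end

section
/- For every even natural number k ≥ 0, J_k = ∫₀^{π/2} x·cos^k(2x) dx = (π/4)·W_k, where W_k = ∫₀^{π/2} cos^k(x) dx. -/
open Real

theorem stmt_9 (k : ℕ) (hk : Even k) :
    ∫ x in (0:ℝ)..(π/2), x * cos (2*x) ^ k =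
      (π/4) * ∫ x in (0:ℝ)..(π/2), cos x ^ k := by
  have hcont : Continuous fun x : ℝ => x * cos (2*x) ^ k := by continuity
  have hcont2 : Continuous fun x : ℝ => (π/2 - x) * cos (2*x) ^ k := by continuity
  -- symmetry
  have hsym : (∫ x in (0:ℝ)..(π/2), x * cos (2*x) ^ k) =
      ∫ x in (0:ℝ)..(π/2), (π/2 - x) * cos (2*x) ^ k := by
    have := intervalIntegral.integral_comp_sub_left
      (a := (0:ℝ)) (b := π/2) (fun x => x * cos (2*x) ^ k) (π/2)
    simp only [sub_zero, sub_self] at this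
    rw [← this]
    congr 1
    funext x
    have : cos (2 * (π/2 - x)) = - cos (2*x) := by
      rw [show 2 * (π/2 - x) = π - 2*x by ring, cos_pi_sub]
    rw [this, hk.neg_pow]
  have hsum : (∫ x in (0:ℝ)..(π/2), x * cos (2*x) ^ k) +
      (∫ x in (0:ℝ)..(π/2), (π/2 - x) * cos (2*x) ^ k) =
      ∫ x in (0:ℝ)..(π/2), (π/2) * cos (2*x) ^ k := by
    rw [← intervalIntegral.integral_add (hcont.intervalIntegrable _ _) (hcont2.intervalIntegrable _ _)]
    congr 1; funext x; ring
  have hI : (∫ x in (0:ℝ)..(π/2), cos (2*x) ^ k) = ∫ x in (0:ℝ)..(π/2), cos x ^ k := by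
    have h1 := intervalIntegral.integral_comp_mul_left (a := (0:ℝ)) (b := π/2)
      (fun x => cos x ^ k) (two_ne_zero)
    simp only [mul_zero] at h1
    rw [h1, show (2:ℝ) * (π/2) = π by ring]
    have h2 : (∫ x in (0:ℝ)..π, cos x ^ k) = 2 * ∫ x in (0:ℝ)..(π/2), cos x ^ k := by
      have hsplit := intervalIntegral.integral_add_adjacent_intervals
        (μ := MeasureTheory.volume) (a := (0:ℝ)) (b := π/2) (c := π) (f := fun x => cos x ^ k)
        ((Continuous.pow (by continuity) k).intervalIntegrable _ _)
        ((Continuous.pow (by continuity) k).intervalIntegrable _ _)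
      have h3 : (∫ x in (π/2:ℝ)..π, cos x ^ k) = ∫ x in (0:ℝ)..(π/2), cos x ^ k := by
        have := intervalIntegral.integral_comp_sub_left
          (a := (0:ℝ)) (b := π/2) (fun x => cos x ^ k) π
        simp only [sub_zero] at this
        rw [show π - π/2 = π/2 by ring] at this
        rw [← this]
        congr 1; funext x
        rw [cos_pi_sub, hk.neg_pow]
      rw [← hsplit, h3]; ring
    rw [h2]
    simp [smul_eq_mul]
  have hhalf : (∫ x in (0:ℝ)..(π/2), (π/2) * cos (2*x) ^ k) =
      (π/2) * ∫ x in (0:ℝ)..(π/2), cos (2*x) ^ k := by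
    rw [intervalIntegral.integral_const_mul]
  rw [hsym] at hsum
  have : (2:ℝ) * ∫ x in (0:ℝ)..(π/2), (π/2 - x) * cos (2*x) ^ k =
      (π/2) * ∫ x in (0:ℝ)..(π/2), cos x ^ k := by
    rw [two_mul, hsum, hhalf, hI]
  rw [hsym]
  linarith [this]
end

section
/- For every natural number n ≥ 0, J_{2n} = ∫₀^{π/2} x·cos^{2n}(2x) dx = ((2n−1)!!/(2n)!!)·(π²/8). -/
open Real Nat

lemma prod_eq_dfact (n : ℕ) :
    ∏ i ∈ Finset.range n, (2 * (i : ℝ) + 1) / (2 * i + 2) =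
      ((2*n - 1)‼ : ℝ) / ((2*n)‼ : ℝ) := by
  induction n with
  | zero => simp
  | succ k ih =>
    rw [Finset.prod_range_succ, ih]
    have h1 : 2 * (k+1) - 1 = 2*k + 1 := by omega
    have h2 : 2 * (k+1) = 2*k + 2 := by omega
    rw [h1, h2, Nat.doubleFactorial_add_one, Nat.doubleFactorial_add_two]
    push_cast
    have hd1 : ((2*k)‼ : ℝ) ≠ 0 := Nat.cast_ne_zero.2 (Nat.doubleFactorial_pos _).ne'
    have hd2 : ((2*k - 1)‼ : ℝ) ≠ 0 := Nat.cast_ne_zero.2 (Nat.doubleFactorial_pos _).ne'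
    field_simp

theorem stmt_10 (n : ℕ) :
    ∫ x in (0:ℝ)..(π/2), x * cos (2*x) ^ (2*n) =
      (((2*n - 1)‼ : ℝ) / ((2*n)‼ : ℝ)) * (π^2 / 8) := by
  have hcont : Continuous fun x : ℝ => cos (2*x) ^ (2*n) := by fun_prop
  -- symmetry: I = ∫ (π/2 - x) cos(2x)^{2n}
  have h1 : (∫ x in (0:ℝ)..(π/2), x * cos (2*x) ^ (2*n)) =
      ∫ x in (0:ℝ)..(π/2), (π/2 - x) * cos (2*x) ^ (2*n) := by
    have := intervalIntegral.integral_comp_sub_left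
      (a := (0:ℝ)) (b := π/2) (fun x => x * cos (2*x) ^ (2*n)) (π/2)
    simp only [sub_self, sub_zero] at this
    rw [← this]
    congr 1
    ext x
    have : cos (2 * (π/2 - x)) = - cos (2*x) := by
      rw [show 2 * (π/2 - x) = π - 2*x by ring, Real.cos_pi_sub]
    rw [this, neg_pow, Even.neg_one_pow (even_two_mul n), one_mul]
  have h2 : (2:ℝ) * ∫ x in (0:ℝ)..(π/2), x * cos (2*x) ^ (2*n) =
      (π/2) * ∫ x in (0:ℝ)..(π/2), cos (2*x) ^ (2*n) := by
    rw [two_mul]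
    nth_rewrite 2 [h1]
    rw [← intervalIntegral.integral_add (Continuous.intervalIntegrable (by fun_prop) _ _) (Continuous.intervalIntegrable (by fun_prop) _ _),
      ← intervalIntegral.integral_const_mul]
    congr 1; ext x; ring
  -- substitution u = 2x
  have h3 : (∫ x in (0:ℝ)..(π/2), cos (2*x) ^ (2*n)) =
      (1/2) * ∫ x in (0:ℝ)..π, cos x ^ (2*n) := by
    have := intervalIntegral.integral_comp_mul_left
      (a := (0:ℝ)) (b := π/2) (fun x => cos x ^ (2*n)) (c := 2) two_ne_zero
    simp only [mul_zero] at this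
    rw [this, show (2:ℝ) * (π/2) = π by ring, smul_eq_mul]
    norm_num
  -- ∫₀^π cos^{2n} = 2 ∫₀^{π/2} cos^{2n}
  have h4 : (∫ x in (0:ℝ)..π, cos x ^ (2*n)) =
      2 * ∫ x in (0:ℝ)..(π/2), cos x ^ (2*n) := by
    have hrefl : (∫ x in (π/2:ℝ)..π, cos x ^ (2*n)) =
        ∫ x in (0:ℝ)..(π/2), cos x ^ (2*n) := by
      have := intervalIntegral.integral_comp_sub_left
        (a := (0:ℝ)) (b := π/2) (fun x => cos x ^ (2*n)) π
      rw [show π - π/2 = π/2 by ring, sub_zero] at this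
      rw [← this]
      congr 1; ext x
      rw [Real.cos_pi_sub, neg_pow, Even.neg_one_pow (even_two_mul n), one_mul]
    have := intervalIntegral.integral_add_adjacent_intervals
      (a := (0:ℝ)) (b := π/2) (c := π) (μ := MeasureTheory.volume) (f := fun x => cos x ^ (2*n))
      (((continuous_cos.pow (2*n)).intervalIntegrable _ _))
      (((continuous_cos.pow (2*n)).intervalIntegrable _ _))
    rw [← this, hrefl]; ring
  have h5 : (∫ x in (0:ℝ)..(π/2), cos x ^ (2*n)) =
      (1/2) * ∫ x in (0:ℝ)..π, sin x ^ (2*n) := by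
    rw [EulerSine.integral_cos_pow_eq]
  rw [integral_sin_pow_even, prod_eq_dfact] at h5
  have hI : (∫ x in (0:ℝ)..(π/2), x * cos (2*x) ^ (2*n)) =
      (π/4) * ∫ x in (0:ℝ)..(π/2), cos (2*x) ^ (2*n) := by
    linarith [h2]
  rw [hI, h3, h4, h5]
  ring
end

section
/- For every odd natural number k ≥ 1, J_k = ∫₀^{π/2} x·cos^k(2x) dx = (1/2)·I_k − ((k−1)!!/k!!)·(π/4), where I_k = ∫₀^{π/2} x·cos^k(x) dx. -/
open Real Nat

lemma wallis_odd (n : ℕ) :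
    ∫ x in (0:ℝ)..(π/2), cos x ^ (2*n+1) = ((2*n)‼ : ℝ) / ((2*n+1)‼ : ℝ) := by
  induction n with
  | zero => simp
  | succ n ih =>
    have h : 2*(n+1)+1 = (2*n+1) + 2 := by ring
    rw [h, integral_cos_pow, ih]
    have h1 : Real.cos (π/2) = 0 := Real.cos_pi_div_two
    have h2 : Real.sin 0 = 0 := Real.sin_zero
    rw [h1, h2]
    have e1 : (2*(n+1))‼ = (2*n+2) * (2*n)‼ := by
      have : 2*(n+1) = 2*n + 2 := by ring
      rw [this, Nat.doubleFactorial_add_two]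
    have e2 : (2*n+1+2)‼ = (2*n+3) * (2*n+1)‼ := by
      rw [Nat.doubleFactorial_add_two]
    rw [e1, e2]
    push_cast
    have p1 : ((2*n)‼ : ℝ) ≠ 0 := by positivity
    have p2 : ((2*n+1)‼ : ℝ) ≠ 0 := by positivity
    field_simp
    ring

theorem stmt_11 (k : ℕ) (hk : Odd k) :
    ∫ x in (0:ℝ)..(π/2), x * cos (2*x) ^ k =
      (1/2) * (∫ x in (0:ℝ)..(π/2), x * cos x ^ k) -
        (((k - 1)‼ : ℝ) / (k‼ : ℝ)) * (π/4) := by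
  obtain ⟨n, rfl⟩ := hk
  set m := 2*n+1 with hm
  have hodd : Odd m := ⟨n, by ring⟩
  -- continuity of integrands
  have hc1 : ∀ a b : ℝ, IntervalIntegrable (fun x : ℝ => x * cos x ^ m) MeasureTheory.volume a b := by
    intro a b; apply Continuous.intervalIntegrable; fun_prop
  have hc2 : ∀ a b : ℝ, IntervalIntegrable (fun x : ℝ => cos x ^ m) MeasureTheory.volume a b := by
    intro a b; apply Continuous.intervalIntegrable; fun_prop
  -- Step 1: substitution u = 2x
  have step1 : ∫ x in (0:ℝ)..(π/2), x * cos (2*x) ^ m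
      = (1/4) * ∫ u in (0:ℝ)..π, u * cos u ^ m := by
    have := intervalIntegral.smul_integral_comp_mul_left
      (a := (0:ℝ)) (b := π/2) (fun u : ℝ => u * cos u ^ m) 2
    simp only [smul_eq_mul] at this
    have h2 : (2:ℝ) * (π/2) = π := by ring
    have h0 : (2:ℝ) * 0 = 0 := by ring
    rw [h2, h0] at this
    have : ∫ x in (0:ℝ)..(π/2), (2*x) * cos (2*x) ^ m
        = (1/2) * ∫ u in (0:ℝ)..π, u * cos u ^ m := by
      rw [← this]; ring
    calc ∫ x in (0:ℝ)..(π/2), x * cos (2*x) ^ m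
        = (1/2) * ∫ x in (0:ℝ)..(π/2), (2*x) * cos (2*x) ^ m := by
          rw [← intervalIntegral.integral_const_mul]
          apply intervalIntegral.integral_congr
          intro x _; ring
      _ = (1/4) * ∫ u in (0:ℝ)..π, u * cos u ^ m := by rw [this]; ring
  -- Step 2: split and reflect
  have split : ∫ u in (0:ℝ)..π, u * cos u ^ m
      = (∫ u in (0:ℝ)..(π/2), u * cos u ^ m) + ∫ u in (π/2:ℝ)..π, u * cos u ^ m := by
    rw [intervalIntegral.integral_add_adjacent_intervals (hc1 _ _) (hc1 _ _)]
  have reflect : ∫ u in (π/2:ℝ)..π, u * cos u ^ m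
      = (∫ u in (0:ℝ)..(π/2), u * cos u ^ m) - π * ∫ u in (0:ℝ)..(π/2), cos u ^ m := by
    have := intervalIntegral.integral_comp_sub_left
      (a := (0:ℝ)) (b := π/2) (fun u : ℝ => u * cos u ^ m) π
    have hπ : π - π/2 = π/2 := by ring
    rw [hπ, sub_zero] at this
    rw [← this]
    have : ∀ x ∈ Set.uIcc (0:ℝ) (π/2), (π - x) * cos (π - x) ^ m
        = x * cos x ^ m - π * cos x ^ m := by
      intro x _
      rw [Real.cos_pi_sub, hodd.neg_pow]
      ring
    rw [intervalIntegral.integral_congr this,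
      intervalIntegral.integral_sub (hc1 _ _) (by
        apply Continuous.intervalIntegrable; fun_prop),
      intervalIntegral.integral_const_mul]
  -- Wallis
  have hw : ∫ u in (0:ℝ)..(π/2), cos u ^ m = ((2*n)‼ : ℝ) / ((2*n+1)‼ : ℝ) := wallis_odd n
  have hk1 : m - 1 = 2*n := by omega
  rw [step1, split, reflect, hw, hk1, hm]
  ring
end

section
/- For every even natural number k ≥ 2, I_k = ∫₀^{π/2} x·cos^k(x) dx = J_k − ((k−1)!!/(4·k!!)) · ∑_{j=1}^{k/2} (1/j²)·((2j)!!/(2j−1)!!), where J_k = ∫₀^{π/2} x·cos^k(2x) dx. -/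
open Real Nat intervalIntegral


lemma aux_rec (n : ℕ) :
    ((n:ℝ)+2) * (∫ x in (0:ℝ)..(π/2), x * cos x ^ (n+2)) -
    ((n:ℝ)+1) * (∫ x in (0:ℝ)..(π/2), x * cos x ^ n) = -(1/((n:ℝ)+2)) := by
  have hn2 : ((n:ℝ)+2) ≠ 0 := by positivity
  have hd : ∀ x ∈ Set.uIcc (0:ℝ) (π/2),
      HasDerivAt (fun y : ℝ => y * cos y ^ (n+1) * sin y + cos y ^ (n+2) / ((n:ℝ)+2))
        (((n:ℝ)+2) * (x * cos x ^ (n+2)) - ((n:ℝ)+1) * (x * cos x ^ n)) x := by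
    intro x _
    have h1 : HasDerivAt (fun y : ℝ => y * cos y ^ (n+1) * sin y)
        ((1 * cos x ^ (n+1) + x * (((n:ℝ)+1) * cos x ^ n * (-sin x))) * sin x
          + x * cos x ^ (n+1) * cos x) x := by
      have hp : HasDerivAt (fun y : ℝ => cos y ^ (n+1))
          (((n:ℝ)+1) * cos x ^ n * (-sin x)) x := by
        have := (hasDerivAt_cos x).fun_pow (n+1)
        simpa using this
      exact ((hasDerivAt_id x).mul hp).mul (hasDerivAt_sin x)
    have h2 : HasDerivAt (fun y : ℝ => cos y ^ (n+2) / ((n:ℝ)+2))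
        (cos x ^ (n+1) * (-sin x)) x := by
      have := ((hasDerivAt_cos x).fun_pow (n+2)).div_const ((n:ℝ)+2)
      refine this.congr_deriv (Eq.symm ?_)
      push_cast
      field_simp
    have := h1.add h2
    refine this.congr_deriv (Eq.symm ?_)
    have hs := sin_sq_add_cos_sq x
    linear_combination ((n:ℝ)+1) * x * cos x ^ n * hs
  have key := intervalIntegral.integral_eq_sub_of_hasDerivAt hd
    (by apply Continuous.intervalIntegrable; fun_prop)
  rw [intervalIntegral.integral_sub ((by fun_prop : Continuous fun x:ℝ => ((n:ℝ)+2) * (x * cos x ^ (n+2))).intervalIntegrable _ _)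
      ((by fun_prop : Continuous fun x:ℝ => ((n:ℝ)+1) * (x * cos x ^ n)).intervalIntegrable _ _),
    intervalIntegral.integral_const_mul, intervalIntegral.integral_const_mul] at key
  rw [key]
  simp [cos_pi_div_two, sin_zero, cos_zero, sin_pi_div_two]


lemma cos_int (m : ℕ) : ∫ x in (0:ℝ)..(π/2), cos x ^ (2*m)
    = π/2 * (((2*m-1)‼ : ℝ) / ((2*m)‼ : ℝ)) := by
  induction m with
  | zero => simp
  | succ m ih =>
    have h2m : 2*(m+1) = 2*m + 2 := by ring
    rw [h2m, integral_cos_pow]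
    rw [ih]
    have e1 : (2*m + 2 - 1 : ℕ) = 2*m + 1 := by omega
    have e2 : (2*m + 1)‼ = (2*m+1) * (2*m-1)‼ := by
      simpa using Nat.doubleFactorial_add_one (2*m)
    have e3 : (2*m+2)‼ = (2*m+2) * (2*m)‼ := Nat.doubleFactorial_add_two (2*m)
    rw [e1, e2, e3]
    have hb : ((2*m)‼ : ℝ) ≠ 0 := by positivity
    simp [cos_pi_div_two, sin_zero, cos_zero, sin_pi_div_two]
    push_cast
    field_simp


lemma Ival (m : ℕ) : ∫ x in (0:ℝ)..(π/2), x * cos x ^ (2*m) =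
    (((2*m-1)‼ : ℝ) / ((2*m)‼ : ℝ)) *
      (π^2/8 - (1/4) * ∑ j ∈ Finset.Icc 1 m, (1 / (j:ℝ)^2) * (((2*j)‼ : ℝ) / ((2*j - 1)‼ : ℝ))) := by
  induction m with
  | zero => simp [integral_id]; ring
  | succ m ih =>
    have hrec := aux_rec (2*m)
    rw [ih] at hrec
    push_cast at hrec
    have h22 : (2*(m:ℝ)+2) ≠ 0 := by positivity
    have hI : ∫ x in (0:ℝ)..(π/2), x * cos x ^ (2*m+2) =
        ((2*(m:ℝ)+1) * ((((2*m-1)‼ : ℝ) / ((2*m)‼ : ℝ)) *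
          (π^2/8 - (1/4) * ∑ j ∈ Finset.Icc 1 m, (1 / (j:ℝ)^2) * (((2*j)‼ : ℝ) / ((2*j - 1)‼ : ℝ))))
          - 1/(2*(m:ℝ)+2)) / (2*(m:ℝ)+2) := by
      rw [eq_div_iff h22]; linarith
    have hsum : ∑ j ∈ Finset.Icc 1 (m+1), (1 / (j:ℝ)^2) * (((2*j)‼ : ℝ) / ((2*j - 1)‼ : ℝ))
        = (∑ j ∈ Finset.Icc 1 m, (1 / (j:ℝ)^2) * (((2*j)‼ : ℝ) / ((2*j - 1)‼ : ℝ)))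
          + (1 / ((m:ℝ)+1)^2) * (((2*m+2)‼ : ℝ) / ((2*m+1)‼ : ℝ)) := by
      rw [Finset.sum_Icc_succ_top (by omega : 1 ≤ m+1),
        (by omega : 2*(m+1) - 1 = 2*m+1), (by ring : 2*(m+1) = 2*m+2)]
      push_cast; ring
    have e1 : (2*(m+1) - 1 : ℕ) = 2*m + 1 := by omega
    have e2 : (2*m + 1)‼ = (2*m+1) * (2*m-1)‼ := by
      simpa using Nat.doubleFactorial_add_one (2*m)
    have e3 : (2*m+2)‼ = (2*m+2) * (2*m)‼ := Nat.doubleFactorial_add_two (2*m)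
    rw [(by ring : 2*(m+1) = 2*m+2)] at e1 ⊢
    rw [e1, hsum, e2, e3, hI]
    have ha : ((2*m-1)‼ : ℝ) > 0 := by positivity
    have hb : ((2*m)‼ : ℝ) > 0 := by positivity
    push_cast
    field_simp
    ring


lemma Jval (m : ℕ) : ∫ x in (0:ℝ)..(π/2), x * cos (2*x) ^ (2*m)
    = π^2/8 * (((2*m-1)‼ : ℝ) / ((2*m)‼ : ℝ)) := by
  have hC2 : ∫ x in (0:ℝ)..(π/2), cos (2*x) ^ (2*m)
      = π/2 * (((2*m-1)‼ : ℝ) / ((2*m)‼ : ℝ)) := by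
    have h1 := intervalIntegral.integral_comp_mul_left (a := 0) (b := π/2) (c := 2)
      (fun x => cos x ^ (2*m)) (two_ne_zero (α := ℝ))
    -- ∫ x in a..b, f (2*x) = 2⁻¹ • ∫ x in 2a..2b, f
    have h2 : ∫ x in (0:ℝ)..π, cos x ^ (2*m) = 2 * ∫ x in (0:ℝ)..(π/2), cos x ^ (2*m) := by
      have hsplit : ∫ x in (0:ℝ)..π, cos x ^ (2*m)
          = (∫ x in (0:ℝ)..(π/2), cos x ^ (2*m)) + ∫ x in (π/2)..π, cos x ^ (2*m) := by
        rw [intervalIntegral.integral_add_adjacent_intervals] <;>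
          exact (by fun_prop : Continuous fun x:ℝ => cos x ^ (2*m)).intervalIntegrable _ _
      have hsym : ∫ x in (π/2)..π, cos x ^ (2*m) = ∫ x in (0:ℝ)..(π/2), cos x ^ (2*m) := by
        have := intervalIntegral.integral_comp_sub_left (fun x => cos x ^ (2*m)) π (a := 0) (b := π/2)
        rw [(by ring : π - π/2 = π/2), sub_zero] at this
        rw [← this]
        congr 1 with x
        rw [cos_pi_sub, Even.neg_pow (by exact ⟨m, by ring⟩)]
      rw [hsplit, hsym]; ring
    rw [h1]
    rw [(by ring : (2:ℝ) * 0 = 0), (by ring : (2:ℝ) * (π/2) = π), h2, cos_int]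
    simp
  have hsym : ∫ x in (0:ℝ)..(π/2), (π/2 - x) * cos (2*(π/2 - x)) ^ (2*m)
      = ∫ x in (0:ℝ)..(π/2), x * cos (2*x) ^ (2*m) := by
    have := intervalIntegral.integral_comp_sub_left (fun x => x * cos (2*x) ^ (2*m)) (π/2) (a := 0) (b := π/2)
    rw [(by ring : π/2 - π/2 = 0), sub_zero] at this
    exact this
  have hsimp : ∫ x in (0:ℝ)..(π/2), (π/2 - x) * cos (2*(π/2 - x)) ^ (2*m)
      = ∫ x in (0:ℝ)..(π/2), (π/2 - x) * cos (2*x) ^ (2*m) := by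
    congr 1 with x
    rw [(by ring : 2*(π/2 - x) = π - 2*x), cos_pi_sub, Even.neg_pow ⟨m, by ring⟩]
  have hsub : ∫ x in (0:ℝ)..(π/2), (π/2 - x) * cos (2*x) ^ (2*m)
      = (π/2) * (∫ x in (0:ℝ)..(π/2), cos (2*x) ^ (2*m)) - ∫ x in (0:ℝ)..(π/2), x * cos (2*x) ^ (2*m) := by
    rw [← intervalIntegral.integral_const_mul, ← intervalIntegral.integral_sub
      ((by fun_prop : Continuous fun x:ℝ => π/2 * cos (2*x) ^ (2*m)).intervalIntegrable _ _)
      ((by fun_prop : Continuous fun x:ℝ => x * cos (2*x) ^ (2*m)).intervalIntegrable _ _)]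
    congr 1 with x
    ring
  have : 2 * (∫ x in (0:ℝ)..(π/2), x * cos (2*x) ^ (2*m)) = (π/2) * (π/2 * (((2*m-1)‼ : ℝ) / ((2*m)‼ : ℝ))) := by
    rw [← hC2]
    have := hsym
    rw [hsimp, hsub] at this
    linarith
  linarith

theorem stmt_12 (k : ℕ) (hk : Even k) (hk2 : 2 ≤ k) :
    ∫ x in (0:ℝ)..(π/2), x * cos x ^ k =
      (∫ x in (0:ℝ)..(π/2), x * cos (2*x) ^ k) -
      (((k - 1)‼ : ℝ) / (4 * (k‼ : ℝ))) *
        ∑ j ∈ Finset.Icc 1 (k/2), (1 / (j:ℝ)^2) * (((2*j)‼ : ℝ) / ((2*j - 1)‼ : ℝ)) := by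
  obtain ⟨m, hm⟩ := hk
  have hk' : k = 2*m := by omega
  subst hk'
  rw [Ival, Jval, (by omega : 2*m/2 = m)]
  have hb : ((2*m)‼ : ℝ) ≠ 0 := by positivity
  field_simp
end

section
/- For every even natural number k ≥ 2, I_k = ∫₀^{π/2} x·cos^k(x) dx = J_k · ( 1 − (2/π²) · ∑_{j=1}^{k/2} 2^{2j} / (j² · C(2j, j)) ), where J_k = ∫₀^{π/2} x·cos^k(2x) dx and C(2j, j) is the central binomial coefficient. -/
open Real MeasureTheory intervalIntegral

lemma I_rec (n : ℕ) :
    ∫ x in (0:ℝ)..(π/2), x * cos x ^ (n+2) =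
      ((n:ℝ)+1)/((n:ℝ)+2) * (∫ x in (0:ℝ)..(π/2), x * cos x ^ n) - 1/((n:ℝ)+2)^2 := by
  have hu : ∀ x ∈ Set.uIcc (0:ℝ) (π/2),
      HasDerivAt (fun y : ℝ => y * cos y ^ (n+1))
        (cos x ^ (n+1) - ((n:ℝ)+1) * x * sin x * cos x ^ n) x := by
    intro x _
    have := (hasDerivAt_id x).fun_mul ((hasDerivAt_cos x).fun_pow (n+1))
    refine this.congr_deriv ?_
    simp only [id_eq]
    push_cast
    ring
  have hv : ∀ x ∈ Set.uIcc (0:ℝ) (π/2), HasDerivAt sin (cos x) x :=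
    fun x _ => hasDerivAt_sin x
  have H := integral_mul_deriv_eq_deriv_mul hu hv
    (by apply Continuous.intervalIntegrable; fun_prop)
    (by apply Continuous.intervalIntegrable; fun_prop)
  have h1 : ∫ x in (0:ℝ)..(π/2), x * cos x ^ (n+2)
      = ∫ x in (0:ℝ)..(π/2), (x * cos x ^ (n+1)) * cos x := by
    apply intervalIntegral.integral_congr
    intro x _; ring
  have hcs : ∫ x in (0:ℝ)..(π/2), cos x ^ (n+1) * sin x = 1/((n:ℝ)+2) := by
    have hn2 : ((n:ℝ)+2) ≠ 0 := by positivity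
    have hF : ∀ x ∈ Set.uIcc (0:ℝ) (π/2),
        HasDerivAt (fun y : ℝ => -(cos y ^ (n+2)) / ((n:ℝ)+2)) (cos x ^ (n+1) * sin x) x := by
      intro x _
      have := (((hasDerivAt_cos x).fun_pow (n+2)).fun_neg).div_const ((n:ℝ)+2)
      refine this.congr_deriv ?_
      rw [show n + 2 - 1 = n + 1 by omega]
      push_cast
      field_simp
    have := integral_eq_sub_of_hasDerivAt hF (by apply Continuous.intervalIntegrable; fun_prop)
    rw [this]
    simp [cos_pi_div_two, zero_pow (by omega : n+2 ≠ 0)]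
    ring
  have h2 : ∫ x in (0:ℝ)..(π/2), (cos x ^ (n+1) - ((n:ℝ)+1) * x * sin x * cos x ^ n) * sin x
      = 1/((n:ℝ)+2) - ((n:ℝ)+1) * ((∫ x in (0:ℝ)..(π/2), x * cos x ^ n)
          - ∫ x in (0:ℝ)..(π/2), x * cos x ^ (n+2)) := by
    have e1 : ∀ x : ℝ, (cos x ^ (n+1) - ((n:ℝ)+1) * x * sin x * cos x ^ n) * sin x
        = cos x ^ (n+1) * sin x - ((n:ℝ)+1) * (x * (sin x^2 * cos x ^ n)) := by
      intro x; ring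
    simp_rw [e1]
    rw [intervalIntegral.integral_sub (by apply Continuous.intervalIntegrable; fun_prop)
      (by apply Continuous.intervalIntegrable; fun_prop),
      intervalIntegral.integral_const_mul, hcs]
    congr 1
    rw [← intervalIntegral.integral_sub (by apply Continuous.intervalIntegrable; fun_prop)
      (by apply Continuous.intervalIntegrable; fun_prop)]
    congr 1
    apply intervalIntegral.integral_congr
    intro x _
    simp only [sin_sq]
    ring
  rw [h2, cos_pi_div_two] at H
  simp only [zero_pow (by omega : n+1 ≠ 0), sin_zero, mul_zero, zero_mul, zero_sub,
    mul_one, sub_zero, zero_pow] at H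
  set A := ∫ x in (0:ℝ)..(π/2), x * cos x ^ (n+2) with hA
  set B := ∫ x in (0:ℝ)..(π/2), x * cos x ^ n with hB
  rw [← h1] at H
  have hn2 : ((n:ℝ)+2) ≠ 0 := by positivity
  field_simp at H ⊢
  ring_nf at H ⊢
  nlinarith [H]

lemma W_closed (n : ℕ) : ∫ x in (0:ℝ)..(π/2), cos x ^ (2*n)
    = π * (((2*n).choose n : ℕ) : ℝ) / 2^(2*n+1) := by
  induction n with
  | zero => simp
  | succ n ih =>
    have h : 2*(n+1) = 2*n+2 := by ring
    rw [h, integral_cos_pow, ih, cos_pi_div_two, sin_zero]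
    have hbin : ((n:ℝ)+1) * (((2*(n+1)).choose (n+1) : ℕ) : ℝ)
        = 2*(2*(n:ℝ)+1) * (((2*n).choose n : ℕ) : ℝ) := by
      have := Nat.succ_mul_centralBinom_succ n
      simp only [Nat.centralBinom] at this
      exact_mod_cast congrArg (Nat.cast : ℕ → ℝ) this
    have hn1 : ((n:ℝ)+1) ≠ 0 := by positivity
    have hC : (((2*(n+1)).choose (n+1) : ℕ) : ℝ)
        = 2*(2*(n:ℝ)+1) * (((2*n).choose n : ℕ) : ℝ) / ((n:ℝ)+1) := by
      field_simp
      linarith [hbin]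
    rw [h] at hC
    rw [hC]
    simp only [zero_pow (by omega : 2*n+1 ≠ 0), cos_zero, one_pow, sin_pi_div_two,
      mul_zero, zero_mul, sub_zero, zero_sub, mul_one, zero_div, zero_add, neg_zero]
    push_cast
    have h2 : (2:ℝ)^(2*n+1) ≠ 0 := by positivity
    field_simp
    ring

lemma J_eval (n : ℕ) : ∫ x in (0:ℝ)..(π/2), x * cos (2*x) ^ (2*n)
    = (π/4) * ∫ x in (0:ℝ)..(π/2), cos x ^ (2*n) := by
  have hpow : ∀ x : ℝ, cos (π - x) ^ (2*n) = cos x ^ (2*n) := by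
    intro x
    rw [cos_pi_sub, pow_mul, pow_mul, neg_sq]
  have h1 : ∫ x in (0:ℝ)..(π/2), x * cos (2*x) ^ (2*n)
      = (1/4) * ∫ x in (0:ℝ)..π, x * cos x ^ (2*n) := by
    have := integral_comp_mul_left (fun u : ℝ => (u/2) * cos u ^ (2*n)) (two_ne_zero)
      (a := (0:ℝ)) (b := π/2)
    simp only [smul_eq_mul] at this
    rw [show (2:ℝ) * 0 = 0 from by ring, show (2:ℝ) * (π/2) = π from by ring] at this
    have e : ∀ x : ℝ, (2*x/2) * cos (2*x) ^ (2*n) = x * cos (2*x) ^ (2*n) := by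
      intro x; ring
    simp only [e] at this
    rw [this]
    rw [← intervalIntegral.integral_const_mul, ← intervalIntegral.integral_const_mul]
    apply intervalIntegral.integral_congr
    intro x _
    ring
  have h2 : ∫ x in (0:ℝ)..π, x * cos x ^ (2*n)
      = π * (∫ x in (0:ℝ)..π, cos x ^ (2*n)) - ∫ x in (0:ℝ)..π, x * cos x ^ (2*n) := by
    have := integral_comp_sub_left (fun y : ℝ => y * cos y ^ (2*n)) π
      (a := (0:ℝ)) (b := π)
    simp only [sub_self, sub_zero] at this
    have e : ∀ x : ℝ, (π - x) * cos (π - x) ^ (2*n)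
        = π * cos x ^ (2*n) - x * cos x ^ (2*n) := by
      intro x; rw [hpow]; ring
    simp only [e] at this
    rw [intervalIntegral.integral_sub (by apply Continuous.intervalIntegrable; fun_prop)
      (by apply Continuous.intervalIntegrable; fun_prop),
      intervalIntegral.integral_const_mul] at this
    linarith [this]
  have h3 : ∫ x in (0:ℝ)..π, cos x ^ (2*n)
      = 2 * ∫ x in (0:ℝ)..(π/2), cos x ^ (2*n) := by
    have hadd : (∫ x in (0:ℝ)..(π/2), cos x ^ (2*n)) + ∫ x in (π/2:ℝ)..π, cos x ^ (2*n)
        = ∫ x in (0:ℝ)..π, cos x ^ (2*n) :=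
      intervalIntegral.integral_add_adjacent_intervals
        (by apply Continuous.intervalIntegrable; fun_prop)
        (by apply Continuous.intervalIntegrable; fun_prop)
    have hrefl : ∫ x in (π/2:ℝ)..π, cos x ^ (2*n) = ∫ x in (0:ℝ)..(π/2), cos x ^ (2*n) := by
      have := integral_comp_sub_left (fun y : ℝ => cos y ^ (2*n)) π
        (a := (0:ℝ)) (b := π/2)
      simp only [hpow, sub_zero, show π - π/2 = π/2 from by ring] at this
      rw [← this]
    rw [← hadd, hrefl]; ring
  rw [h1]
  have hA : ∫ x in (0:ℝ)..π, x * cos x ^ (2*n) = π * ∫ x in (0:ℝ)..(π/2), cos x ^ (2*n) := by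
    rw [h3] at h2
    linarith [h2]
  rw [hA]
  ring
lemma main_aux (n : ℕ) : ∫ x in (0:ℝ)..(π/2), x * cos x ^ (2*n)
    = (π/4 - (1/(2*π)) * ∑ j ∈ Finset.Icc 1 n, (2:ℝ)^(2*j) / ((j:ℝ)^2 * ((2*j).choose j : ℝ)))
      * (π * (((2*n).choose n : ℕ) : ℝ) / 2^(2*n+1)) := by
  induction n with
  | zero =>
    simp only [Nat.mul_zero, pow_zero, mul_one, Finset.Icc_self, Nat.choose_zero_right]
    rw [integral_id]
    simp
    ring
  | succ n ih =>
    have h : 2*(n+1) = 2*n+2 := by ring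
    simp only [h]
    rw [I_rec (2*n), ih, Finset.sum_Icc_succ_top (by omega : 1 ≤ n+1)]
    simp only [h]
    have hbin : ((n:ℝ)+1) * (((2*(n+1)).choose (n+1) : ℕ) : ℝ)
        = 2*(2*(n:ℝ)+1) * (((2*n).choose n : ℕ) : ℝ) := by
      have := Nat.succ_mul_centralBinom_succ n
      simp only [Nat.centralBinom] at this
      exact_mod_cast congrArg (Nat.cast : ℕ → ℝ) this
    have hn1 : ((n:ℝ)+1) ≠ 0 := by positivity
    have hCn : (((2*n).choose n : ℕ) : ℝ) ≠ 0 := by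
      have := Nat.centralBinom_pos n
      simp only [Nat.centralBinom] at this
      positivity
    have hC : (((2*(n+1)).choose (n+1) : ℕ) : ℝ)
        = 2*(2*(n:ℝ)+1) * (((2*n).choose n : ℕ) : ℝ) / ((n:ℝ)+1) := by
      field_simp
      linarith [hbin]
    rw [h] at hC
    rw [hC]
    have hpi : π ≠ 0 := pi_ne_zero
    have h2 : (2:ℝ)^(2*n+1) ≠ 0 := by positivity
    push_cast
    field_simp
    ring

open Real

theorem stmt_13 (k : ℕ) (hk : Even k) (hk2 : 2 ≤ k) :
    ∫ x in (0:ℝ)..(π/2), x * cos x ^ k =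
      (∫ x in (0:ℝ)..(π/2), x * cos (2*x) ^ k) *
        (1 - (2 / π^2) *
          ∑ j ∈ Finset.Icc 1 (k/2), (2:ℝ)^(2*j) / ((j:ℝ)^2 * ((2*j).choose j : ℝ))) := by
  obtain ⟨m, rfl⟩ := hk
  have hm : m + m = 2 * m := by ring
  have hd : (m + m) / 2 = m := by omega
  rw [hm, hd, J_eval m, W_closed m] at *
  rw [main_aux m]
  have hpi : π ≠ 0 := Real.pi_ne_zero
  field_simp
  ring
end

section
/- For every real number x with |x| < 1, the series ∑_{n=0}^{∞} J_{2n}·x^n converges and 1/√(1−x) = (8/π²) · ∑_{n=0}^{∞} J_{2n}·x^n, where J_{2n} = ∫₀^{π/2} t·cos^{2n}(2t) dt. -/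
open Real MeasureTheory

noncomputable def Fa (a u : ℝ) : ℝ :=
  (u + arctan ((1 - a) * sin u * cos u / (a * cos u ^ 2 + sin u ^ 2))) / a

lemma Dpos {a : ℝ} (ha : 0 < a) (u : ℝ) : 0 < a * cos u ^ 2 + sin u ^ 2 := by
  have h := sin_sq_add_cos_sq u
  rcases eq_or_lt_of_le (sq_nonneg (cos u)) with h1 | h1
  · nlinarith
  · nlinarith [mul_pos ha h1, sq_nonneg (sin u)]

lemma hFa {a : ℝ} (ha : 0 < a) (u : ℝ) :
    HasDerivAt (Fa a) (1 / (a ^ 2 * cos u ^ 2 + sin u ^ 2)) u := by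
  have hD := Dpos ha u
  have hD2 : (0:ℝ) < a ^ 2 * cos u ^ 2 + sin u ^ 2 := by
    have := Dpos (show (0:ℝ) < a ^ 2 by positivity) u; linarith
  have hN : HasDerivAt (fun u => (1 - a) * sin u * cos u)
      ((1 - a) * cos u * cos u + (1 - a) * sin u * (-sin u)) u :=
    ((hasDerivAt_sin u).const_mul (1 - a)).mul (hasDerivAt_cos u)
  have hDD : HasDerivAt (fun u => a * cos u ^ 2 + sin u ^ 2)
      (a * (2 * cos u ^ 1 * (-sin u)) + 2 * sin u ^ 1 * cos u) u :=
    (((hasDerivAt_cos u).pow 2).const_mul a).add ((hasDerivAt_sin u).pow 2)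
  have hQ := hN.div hDD (ne_of_gt hD)
  have hA := hQ.arctan
  have hfin := ((hasDerivAt_id u).add hA).div_const a
  refine hfin.congr_deriv ?_
  symm
  have h1y : (0:ℝ) < 1 + ((1 - a) * sin u * cos u / (a * cos u ^ 2 + sin u ^ 2)) ^ 2 := by
    positivity
  have hsc := sin_sq_add_cos_sq u
  simp only [Pi.div_apply]
  field_simp
  rw [show sin u ^ 2 = 1 - cos u ^ 2 by linarith]
  ring

lemma cont_den {a : ℝ} (ha : 0 < a) :
    Continuous (fun u : ℝ => 1 / (a ^ 2 * cos u ^ 2 + sin u ^ 2)) := by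
  refine continuous_const.div (by fun_prop) (fun u => ?_)
  have := Dpos (show (0:ℝ) < a ^ 2 by positivity) u
  linarith

lemma int_Fa {a : ℝ} (ha : 0 < a) :
    ∫ u in (0:ℝ)..π, 1 / (a ^ 2 * cos u ^ 2 + sin u ^ 2) = π / a := by
  rw [intervalIntegral.integral_eq_sub_of_hasDerivAt (fun u _ => hFa ha u)
    ((cont_den ha).intervalIntegrable 0 π)]
  simp [Fa]

theorem stmt_15 (x : ℝ) (hx : |x| < 1) :
    Summable (fun n : ℕ => (∫ t in (0:ℝ)..(π/2), t * cos (2*t) ^ (2*n)) * x^n) ∧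
    1 / Real.sqrt (1 - x) =
      (8 / π^2) * ∑' n : ℕ, (∫ t in (0:ℝ)..(π/2), t * cos (2*t) ^ (2*n)) * x^n := by
  obtain ⟨hx1, hx2⟩ := abs_lt.mp hx
  have hx1' : (0:ℝ) < 1 - x := by linarith
  set a := Real.sqrt (1 - x) with ha_def
  have ha : 0 < a := Real.sqrt_pos.mpr hx1'
  have ha2 : a ^ 2 = 1 - x := Real.sq_sqrt hx1'.le
  have hpi : (0:ℝ) < π / 2 := by positivity
  set g : ℝ → ℝ := fun t => 1 / (1 - x * cos (2*t) ^ 2) with hg_def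
  have hpos : ∀ t : ℝ, 0 < 1 - x * cos (2*t) ^ 2 := by
    intro t
    nlinarith [le_abs_self x, abs_nonneg x, sq_nonneg (cos (2*t)), cos_sq_le_one (2*t)]
  have hden : ∀ t : ℝ, 1 - x * cos (2*t) ^ 2 = a ^ 2 * cos (2*t) ^ 2 + sin (2*t) ^ 2 := by
    intro t
    have hsc := sin_sq_add_cos_sq (2*t)
    linear_combination (-(cos (2*t))^2) * ha2 + (-1) * hsc
  have hgcont : Continuous g := by
    refine continuous_const.div (by fun_prop) (fun t => (hpos t).ne')
  -- pointwise geometric sum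
  have hgeom : ∀ t : ℝ, HasSum (fun n : ℕ => t * cos (2*t) ^ (2*n) * x ^ n)
      (t * g t) := by
    intro t
    have hr : |x * cos (2*t) ^ 2| < 1 := by
      rw [abs_mul]
      calc |x| * |cos (2*t) ^ 2| ≤ |x| * 1 := by
            refine mul_le_mul_of_nonneg_left ?_ (abs_nonneg x)
            rw [abs_of_nonneg (sq_nonneg _)]; exact cos_sq_le_one (2*t)
        _ < 1 := by rwa [mul_one]
    have h := (hasSum_geometric_of_abs_lt_one hr).mul_left t
    have h2 : (fun n : ℕ => t * (x * cos (2*t) ^ 2) ^ n)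
        = fun n : ℕ => t * cos (2*t) ^ (2*n) * x ^ n := by
      funext n; rw [mul_pow, pow_mul]; ring
    rw [h2] at h
    rw [show t * g t = t * (1 - x * cos (2*t) ^ 2)⁻¹ by rw [hg_def]; ring]
    exact h
  -- swap sum and integral
  have hInt : ∀ n : ℕ, IntegrableOn (fun t => t * cos (2*t) ^ (2*n) * x ^ n)
      (Set.Ioc 0 (π/2)) volume := by
    intro n
    exact (by fun_prop : Continuous fun t : ℝ => t * cos (2*t) ^ (2*n) * x ^ n).integrableOn_Ioc
  have hnorm : Summable fun n : ℕ =>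
      ∫ t in Set.Ioc (0:ℝ) (π/2), ‖t * cos (2*t) ^ (2*n) * x ^ n‖ := by
    refine Summable.of_nonneg_of_le (fun n => integral_nonneg (fun t => norm_nonneg _))
      (fun n => ?_)
      (((summable_geometric_of_lt_one (abs_nonneg x) hx).mul_left (π/2)).mul_left (π/2))
    have hb : ∫ t in Set.Ioc (0:ℝ) (π/2), ‖t * cos (2*t) ^ (2*n) * x ^ n‖
        ≤ ∫ _t in Set.Ioc (0:ℝ) (π/2), (π/2) * |x| ^ n := by
      refine setIntegral_mono_on ((hInt n).norm) (integrableOn_const ?_)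
        measurableSet_Ioc (fun t ht => ?_)
      · rw [Real.volume_Ioc]; exact ENNReal.ofReal_ne_top
      · rw [Real.norm_eq_abs, abs_mul, abs_mul, abs_pow, abs_pow]
        have h1 : |t| ≤ π/2 := by
          rw [abs_of_pos ht.1]; exact ht.2
        have h2 : |cos (2*t)| ^ (2*n) ≤ 1 := pow_le_one₀ (abs_nonneg _) (abs_cos_le_one _)
        calc |t| * |cos (2*t)| ^ (2*n) * |x| ^ n
            ≤ (π/2) * 1 * |x| ^ n := by
              refine mul_le_mul_of_nonneg_right ?_ (pow_nonneg (abs_nonneg x) n)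
              exact mul_le_mul h1 h2 (pow_nonneg (abs_nonneg _) _) hpi.le
          _ = (π/2) * |x| ^ n := by ring
    calc _ ≤ ∫ _t in Set.Ioc (0:ℝ) (π/2), (π/2) * |x| ^ n := hb
      _ = (π/2) * ((π/2) * |x| ^ n) := by
          rw [setIntegral_const, Real.volume_real_Ioc_of_le hpi.le, sub_zero, smul_eq_mul]
  have hHS := hasSum_integral_of_summable_integral_norm hInt hnorm
  -- identify terms and sum
  have hterm : (fun n : ℕ => ∫ t in Set.Ioc (0:ℝ) (π/2), t * cos (2*t) ^ (2*n) * x ^ n)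
      = fun n : ℕ => (∫ t in (0:ℝ)..(π/2), t * cos (2*t) ^ (2*n)) * x ^ n := by
    funext n
    rw [intervalIntegral.integral_of_le hpi.le, ← integral_mul_const]
  have htsum : (∫ t in Set.Ioc (0:ℝ) (π/2),
      ∑' n : ℕ, t * cos (2*t) ^ (2*n) * x ^ n) = ∫ t in (0:ℝ)..(π/2), t * g t := by
    rw [intervalIntegral.integral_of_le hpi.le]
    refine setIntegral_congr_fun measurableSet_Ioc (fun t _ => ?_)
    exact (hgeom t).tsum_eq
  rw [hterm, htsum] at hHS
  -- evaluate ∫ g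
  have hIg : ∫ t in (0:ℝ)..(π/2), g t = π / (2 * a) := by
    have he : g = fun t => (fun u => 1 / (a ^ 2 * cos u ^ 2 + sin u ^ 2)) (2 * t) := by
      funext t; simp only [hg_def]; rw [hden t]
    rw [he, intervalIntegral.integral_comp_mul_left
      (fun u => 1 / (a ^ 2 * cos u ^ 2 + sin u ^ 2)) (two_ne_zero)]
    rw [smul_eq_mul, show (2:ℝ) * (π/2) = π by ring, show (2:ℝ) * 0 = 0 by ring, int_Fa ha]
    field_simp
  -- symmetry
  have hsymm : ∀ t : ℝ, g (π/2 - t) = g t := by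
    intro t
    simp only [hg_def]
    rw [show 2 * (π/2 - t) = π - 2*t by ring, Real.cos_pi_sub]
    ring_nf
  have hkey : ∫ t in (0:ℝ)..(π/2), (π/2 - t) * g (π/2 - t) = ∫ t in (0:ℝ)..(π/2), t * g t := by
    have := intervalIntegral.integral_comp_sub_left (a := 0) (b := π/2)
      (fun t => t * g t) (π/2)
    simpa using this
  have hItg : ∫ t in (0:ℝ)..(π/2), t * g t = π^2 / (8 * a) := by
    have h1 : ∫ t in (0:ℝ)..(π/2), (π/2 - t) * g t = ∫ t in (0:ℝ)..(π/2), t * g t := by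
      rw [← hkey]
      refine intervalIntegral.integral_congr (fun t _ => ?_)
      rw [hsymm t]
    have hint1 : IntervalIntegrable (fun t => t * g t) volume 0 (π/2) :=
      (continuous_id.mul hgcont).intervalIntegrable 0 (π/2)
    have hint2 : IntervalIntegrable (fun t => (π/2) * g t) volume 0 (π/2) :=
      (continuous_const.mul hgcont).intervalIntegrable 0 (π/2)
    have h2 : ∫ t in (0:ℝ)..(π/2), (π/2 - t) * g t
        = (∫ t in (0:ℝ)..(π/2), (π/2) * g t) - ∫ t in (0:ℝ)..(π/2), t * g t := by
      rw [← intervalIntegral.integral_sub hint2 hint1]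
      refine intervalIntegral.integral_congr (fun t _ => ?_)
      ring
    have h3 : ∫ t in (0:ℝ)..(π/2), (π/2) * g t = (π/2) * (π / (2*a)) := by
      rw [intervalIntegral.integral_const_mul, hIg]
    have := h1
    rw [h2, h3] at this
    have hane : a ≠ 0 := ha.ne'
    field_simp at this ⊢
    linarith
  rw [hItg] at hHS
  refine ⟨hHS.summable, ?_⟩
  rw [hHS.tsum_eq]
  have hπ : π ≠ 0 := pi_ne_zero
  have hane : a ≠ 0 := ha.ne'
  field_simp
end

section
/- For every real number x with |x| < 1, the series ∑_{n=0}^{∞} W_{2n}·x^n converges and 1/√(1−x) = (2/π) · ∑_{n=0}^{∞} W_{2n}·x^n, where W_{2n} = ∫₀^{π/2} cos^{2n}(t) dt is the Wallis integral. -/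
open Real

lemma denom_pos {x : ℝ} (hx : |x| < 1) (t : ℝ) : 0 < 1 - x * cos t ^ 2 := by
  have h1 : x * cos t ^ 2 ≤ |x * cos t ^ 2| := le_abs_self _
  have h2 : |x * cos t ^ 2| = |x| * |cos t| ^ 2 := by rw [abs_mul, abs_pow]
  have h3 : |x| * |cos t| ^ 2 ≤ |x| * 1 := by
    apply mul_le_mul_of_nonneg_left _ (abs_nonneg x)
    exact pow_le_one₀ (abs_nonneg _) (abs_cos_le_one t)
  nlinarith

lemma alg1 (x c s co : ℝ) (hc : c ≠ 0) (hco : co ≠ 0)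
    (hsc : s^2 = 1 - co^2) (hc2 : c^2 = 1-x) (hne : 1 - x*co^2 ≠ 0) :
    (1 - x*co^2)⁻¹ = 1/c * ((1 + (s/co/c)^2)⁻¹ * (1/co^2/c)) := by
  have hx : x = 1 - c^2 := by linarith
  subst hx
  rw [div_div, div_pow, mul_pow, hsc]
  rw [show (1:ℝ) + (1 - co^2)/(co^2*c^2) = (1 - (1-c^2)*co^2)/(co^2*c^2) by field_simp; ring]
  field_simp

lemma alg2 (x c s co : ℝ) (hc : c ≠ 0) (hs : s ≠ 0)
    (hsc : co^2 = 1 - s^2) (hc2 : c^2 = 1-x) (hne : 1 - x*co^2 ≠ 0) :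
    (1 - x*co^2)⁻¹ = -(1/c) * ((1 + (c*(co/s))^2)⁻¹ * (c*((-s*s - co*co)/s^2))) := by
  have hx : x = 1 - c^2 := by linarith
  subst hx
  have hcm : -s*s - co*co = -(1:ℝ) := by nlinarith [hsc]
  rw [hcm, mul_pow, div_pow, hsc] at *
  rw [show (1:ℝ) + c^2*((1 - s^2)/s^2) = (s^2 + c^2*(1-s^2))/s^2 by field_simp]
  have hne2 : s^2 + c^2*(1-s^2) ≠ 0 := by
    intro h0; apply hne; nlinarith
  field_simp
  ring

lemma integral_inv_denom {x : ℝ} (hx : |x| < 1) :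
    (∫ t in (0:ℝ)..(π/2), (1 - x * cos t ^ 2)⁻¹) = π / (2 * Real.sqrt (1 - x)) := by
  set c := Real.sqrt (1 - x) with hcdef
  have hx1 : x < 1 := lt_of_le_of_lt (le_abs_self x) hx
  have hc : 0 < c := Real.sqrt_pos.mpr (by linarith)
  have hc2 : c ^ 2 = 1 - x := Real.sq_sqrt (by linarith)
  have hcont : Continuous fun t : ℝ => (1 - x * cos t ^ 2)⁻¹ := by
    apply Continuous.inv₀
    · fun_prop
    · intro t; exact ne_of_gt (denom_pos hx t)
  have hint : ∀ a b : ℝ, IntervalIntegrable (fun t => (1 - x * cos t ^ 2)⁻¹)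
      MeasureTheory.volume a b := fun a b => hcont.intervalIntegrable a b
  have h1 : (∫ t in (0:ℝ)..(π/4), (1 - x * cos t ^ 2)⁻¹)
      = (1/c) * Real.arctan (1/c) := by
    have : ∀ t ∈ Set.uIcc (0:ℝ) (π/4),
        HasDerivAt (fun s => (1/c) * Real.arctan (Real.tan s / c))
          ((1 - x * cos t ^ 2)⁻¹) t := by
      intro t ht
      rw [Set.uIcc_of_le (by positivity)] at ht
      have hcos : 0 < cos t := by
        apply Real.cos_pos_of_mem_Ioo
        constructor
        · linarith [ht.1, pi_pos]
        · linarith [ht.2, pi_pos]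
      have htan : HasDerivAt Real.tan (1 / cos t ^ 2) t :=
        Real.hasDerivAt_tan (ne_of_gt hcos)
      have h2 : HasDerivAt (fun s => Real.tan s / c) (1 / cos t ^ 2 / c) t := htan.div_const c
      have h3 : HasDerivAt (fun s => Real.arctan (Real.tan s / c))
          ((1 + (Real.tan t / c)^2)⁻¹ * (1 / cos t ^ 2 / c)) t := by
        have := (Real.hasDerivAt_arctan (Real.tan t / c)).comp t h2
        exact this.congr_deriv (by simp only [one_div])
      have h4 := h3.const_mul (1/c)
      refine h4.congr_deriv (Eq.symm ?_)
      rw [Real.tan_eq_sin_div_cos]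
      exact alg1 x c (sin t) (cos t) (ne_of_gt hc) (ne_of_gt hcos)
        (by nlinarith [Real.sin_sq_add_cos_sq t]) hc2 (ne_of_gt (denom_pos hx t))
    rw [intervalIntegral.integral_eq_sub_of_hasDerivAt this (hint 0 (π/4))]
    simp [Real.tan_pi_div_four, Real.tan_zero, Real.arctan_zero]
  have h2 : (∫ t in (π/4:ℝ)..(π/2), (1 - x * cos t ^ 2)⁻¹)
      = (1/c) * Real.arctan c := by
    have : ∀ t ∈ Set.uIcc (π/4:ℝ) (π/2),
        HasDerivAt (fun s => -(1/c) * Real.arctan (c * (cos s / sin s)))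
          ((1 - x * cos t ^ 2)⁻¹) t := by
      intro t ht
      rw [Set.uIcc_of_le (by linarith [pi_pos])] at ht
      have hsin : 0 < sin t := by
        apply Real.sin_pos_of_pos_of_lt_pi
        · linarith [ht.1, pi_pos]
        · linarith [ht.2, pi_pos]
      have hcot : HasDerivAt (fun s => cos s / sin s)
          ((-sin t * sin t - cos t * cos t) / sin t ^ 2) t := by
        exact (Real.hasDerivAt_cos t).div (Real.hasDerivAt_sin t) (ne_of_gt hsin)
      have h2' : HasDerivAt (fun s => c * (cos s / sin s))
          (c * ((-sin t * sin t - cos t * cos t) / sin t ^ 2)) t := hcot.const_mul c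
      have h3 : HasDerivAt (fun s => Real.arctan (c * (cos s / sin s)))
          ((1 + (c * (cos t / sin t))^2)⁻¹ *
            (c * ((-sin t * sin t - cos t * cos t) / sin t ^ 2))) t := by
        have := (Real.hasDerivAt_arctan (c * (cos t / sin t))).comp t h2'
        exact this.congr_deriv (by simp only [one_div])
      have h4 := h3.const_mul (-(1/c))
      refine h4.congr_deriv (Eq.symm ?_)
      exact alg2 x c (sin t) (cos t) (ne_of_gt hc) (ne_of_gt hsin)
        (by nlinarith [Real.sin_sq_add_cos_sq t]) hc2 (ne_of_gt (denom_pos hx t))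
    rw [intervalIntegral.integral_eq_sub_of_hasDerivAt this (hint (π/4) (π/2))]
    have hs : sin (π/4) = cos (π/4) := by
      rw [Real.sin_pi_div_four, Real.cos_pi_div_four]
    have hc4 : cos (π/4) ≠ 0 := by
      rw [Real.cos_pi_div_four]; positivity
    simp [Real.cos_pi_div_two, hs, div_self hc4]
  have hsplit : (∫ t in (0:ℝ)..(π/2), (1 - x * cos t ^ 2)⁻¹)
      = (∫ t in (0:ℝ)..(π/4), (1 - x * cos t ^ 2)⁻¹)
        + ∫ t in (π/4:ℝ)..(π/2), (1 - x * cos t ^ 2)⁻¹ :=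
    (intervalIntegral.integral_add_adjacent_intervals (hint 0 (π/4)) (hint (π/4) (π/2))).symm
  rw [hsplit, h1, h2]
  have harc : Real.arctan (1/c) + Real.arctan c = π/2 := by
    rw [one_div, Real.arctan_inv_of_pos hc]; ring
  rw [← mul_add, harc]
  rw [div_mul_eq_mul_div, one_mul, div_div]

theorem stmt_16 (x : ℝ) (hx : |x| < 1) :
    Summable (fun n : ℕ => (∫ t in (0:ℝ)..(π/2), cos t ^ (2*n)) * x^n) ∧
    1 / Real.sqrt (1 - x) =
      (2 / π) * ∑' n : ℕ, (∫ t in (0:ℝ)..(π/2), cos t ^ (2*n)) * x^n := by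
  have hx1 : x < 1 := lt_of_le_of_lt (le_abs_self x) hx
  have hpi : (0:ℝ) < π := pi_pos
  have hW_bound : ∀ n : ℕ, |∫ t in (0:ℝ)..(π/2), cos t ^ (2*n)| ≤ π/2 := by
    intro n
    have h0 : (0:ℝ) ≤ ∫ t in (0:ℝ)..(π/2), cos t ^ (2*n) := by
      apply intervalIntegral.integral_nonneg (by positivity)
      intro u _
      rw [pow_mul]
      positivity
    rw [abs_of_nonneg h0]
    calc (∫ t in (0:ℝ)..(π/2), cos t ^ (2*n))
        ≤ ∫ _t in (0:ℝ)..(π/2), (1:ℝ) := by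
          apply intervalIntegral.integral_mono_on (by positivity)
          · exact ((continuous_cos.pow _).intervalIntegrable _ _)
          · exact intervalIntegrable_const
          · intro u _
            rw [pow_mul]
            exact pow_le_one₀ (sq_nonneg _)
              (by nlinarith [Real.cos_le_one u, Real.neg_one_le_cos u])
      _ = π/2 := by simp
  have hsummable : Summable (fun n : ℕ => (∫ t in (0:ℝ)..(π/2), cos t ^ (2*n)) * x^n) := by
    apply Summable.of_norm_bounded (g := fun n => (π/2) * |x|^n)
    · exact (summable_geometric_of_lt_one (abs_nonneg x) hx).mul_left _
    · intro n
      rw [Real.norm_eq_abs, abs_mul, abs_pow]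
      exact mul_le_mul_of_nonneg_right (hW_bound n) (by positivity)
  refine ⟨hsummable, ?_⟩
  have hmeas : ∀ n : ℕ, MeasureTheory.Integrable (fun t : ℝ => cos t ^ (2*n) * x^n)
      (MeasureTheory.volume.restrict (Set.Ioc (0:ℝ) (π/2))) := by
    intro n
    apply Continuous.integrableOn_Ioc
    fun_prop
  have hswap : (∑' n : ℕ, ∫ t in Set.Ioc (0:ℝ) (π/2), cos t ^ (2*n) * x^n)
      = ∫ t in Set.Ioc (0:ℝ) (π/2), ∑' n : ℕ, cos t ^ (2*n) * x^n := by
    apply MeasureTheory.integral_tsum_of_summable_integral_norm hmeas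
    apply Summable.of_nonneg_of_le
        (fun n => MeasureTheory.integral_nonneg (fun t => norm_nonneg _))
        (fun n => ?_)
        ((summable_geometric_of_lt_one (abs_nonneg x) hx).mul_left (π/2))
    calc (∫ t in Set.Ioc (0:ℝ) (π/2), ‖cos t ^ (2*n) * x^n‖)
        ≤ ∫ _t in Set.Ioc (0:ℝ) (π/2), |x|^n := by
          apply MeasureTheory.integral_mono_of_nonneg
          · filter_upwards with t; exact norm_nonneg _
          · exact MeasureTheory.integrableOn_const measure_Ioc_lt_top.ne
          · filter_upwards with t
            rw [Real.norm_eq_abs, abs_mul, abs_pow, abs_pow, pow_mul]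
            have h1 : (|cos t| ^ 2) ^ n ≤ 1 :=
              pow_le_one₀ (sq_nonneg _) (pow_le_one₀ (abs_nonneg _) (abs_cos_le_one t))
            nlinarith [pow_nonneg (abs_nonneg x) n,
              pow_nonneg (sq_nonneg (|cos t|)) n]
      _ ≤ π/2 * |x|^n := by
          rw [MeasureTheory.setIntegral_const]
          rw [Real.volume_real_Ioc_of_le (by positivity), smul_eq_mul, sub_zero]
  have hIoc : ∀ f : ℝ → ℝ, (∫ t in (0:ℝ)..(π/2), f t) = ∫ t in Set.Ioc (0:ℝ) (π/2), f t := by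
    intro f
    rw [intervalIntegral.integral_of_le (by positivity)]
  have hterm : ∀ n : ℕ, (∫ t in (0:ℝ)..(π/2), cos t ^ (2*n)) * x^n
      = ∫ t in Set.Ioc (0:ℝ) (π/2), cos t ^ (2*n) * x^n := by
    intro n
    rw [hIoc, ← MeasureTheory.integral_mul_const]
  have hpt : ∀ t : ℝ, (∑' n : ℕ, cos t ^ (2*n) * x^n) = (1 - x * cos t ^ 2)⁻¹ := by
    intro t
    have habs : |x * cos t ^ 2| < 1 := by
      rw [abs_mul, abs_pow]
      calc |x| * |cos t|^2 ≤ |x| * 1 :=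
            mul_le_mul_of_nonneg_left (pow_le_one₀ (abs_nonneg _) (abs_cos_le_one t))
              (abs_nonneg x)
        _ < 1 := by rwa [mul_one]
    have hgeo := tsum_geometric_of_abs_lt_one (r := x * cos t ^ 2) habs
    calc (∑' n : ℕ, cos t ^ (2*n) * x^n) = ∑' n : ℕ, (x * cos t ^ 2)^n := by
          congr 1; funext n; rw [mul_pow, pow_mul]; ring
      _ = (1 - x * cos t ^ 2)⁻¹ := hgeo
  have key : (∑' n : ℕ, (∫ t in (0:ℝ)..(π/2), cos t ^ (2*n)) * x^n)
      = π / (2 * Real.sqrt (1 - x)) := by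
    calc (∑' n : ℕ, (∫ t in (0:ℝ)..(π/2), cos t ^ (2*n)) * x^n)
        = ∑' n : ℕ, ∫ t in Set.Ioc (0:ℝ) (π/2), cos t ^ (2*n) * x^n := by
          congr 1; funext n; exact hterm n
      _ = ∫ t in Set.Ioc (0:ℝ) (π/2), ∑' n : ℕ, cos t ^ (2*n) * x^n := hswap
      _ = ∫ t in Set.Ioc (0:ℝ) (π/2), (1 - x * cos t ^ 2)⁻¹ := by
          congr 1; funext t; exact hpt t
      _ = ∫ t in (0:ℝ)..(π/2), (1 - x * cos t ^ 2)⁻¹ := (hIoc _).symm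
      _ = π / (2 * Real.sqrt (1 - x)) := integral_inv_denom hx
  rw [key]
  have hs : (0:ℝ) < Real.sqrt (1 - x) := Real.sqrt_pos.mpr (by linarith)
  field_simp
end
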